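/- Let (X,Y) be a centered bivariate Gaussian vector with Var(X) = Var(Y) = C(K,2) and Cov(X,Y) = C(l,2), where 2 ≤ l ≤ K-1 are integers (so the covariance matrix is nonsingular). Then for any γ > 0, P(X ≥ γ·C(K,2) and Y ≥ γ·C(K,2)) ≤ (1/(2πγ²)) · [C(K,2) + C(l,2)]² / (C(K,2)²·√(C(K,2)² - C(l,2)²)) · exp(-γ²·C(K,2)²/(C(K,2) + C(l,2))). -/

import Mathlib

open MeasureTheory ProbabilityTheory Real
open scoped ENNReal NNReal

lemma sqrt_const_eq (w v : ℝ) (hw : 0 < w) (hv : 0 < v) :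
    Real.sqrt (2*π*w) * Real.sqrt (2*π*v) * Real.sqrt (2*π*v)
      = 2*π*Real.sqrt (v*(v+2*w)) * Real.sqrt (2*π*(w*v/(v+2*w))) := by
  have hπ := Real.pi_pos
  have h1 : Real.sqrt (2*π*v) * Real.sqrt (2*π*v) = 2*π*v := Real.mul_self_sqrt (by positivity)
  have h2 : Real.sqrt (v*(v+2*w)) * Real.sqrt (2*π*(w*v/(v+2*w))) = v * Real.sqrt (2*π*w) := by
    rw [← Real.sqrt_mul (by positivity)]
    rw [show v*(v+2*w)*(2*π*(w*v/(v+2*w))) = v^2*(2*π*w) by field_simp]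
    rw [Real.sqrt_mul (by positivity), Real.sqrt_sq hv.le]
  calc Real.sqrt (2*π*w) * Real.sqrt (2*π*v) * Real.sqrt (2*π*v)
      = Real.sqrt (2*π*w) * (2*π*v) := by rw [mul_assoc, h1]
    _ = 2*π*(v * Real.sqrt (2*π*w)) := by ring
    _ = 2*π*(Real.sqrt (v*(v+2*w)) * Real.sqrt (2*π*(w*v/(v+2*w)))) := by rw [h2]
    _ = _ := by ring

lemma core_ineq (w v c x y u : ℝ) (hw : 0 < w) (hv : 0 < v) :
    (1 / Real.sqrt (2*π*w)) * Real.exp (-u^2/(2*w)) *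
    ((1 / Real.sqrt (2*π*v)) * Real.exp (-(x-u)^2/(2*v))) *
    ((1 / Real.sqrt (2*π*v)) * Real.exp (-(y-u)^2/(2*v)))
    ≤ (Real.exp (-c^2/(v+2*w)) / (2*π*Real.sqrt (v*(v+2*w)))) *
      Real.exp (-(c/(v+2*w))*(x-c)) * Real.exp (-(c/(v+2*w))*(y-c)) *
      ((1 / Real.sqrt (2*π*(w*v/(v+2*w)))) *
        Real.exp (-(u - w*(x+y)/(v+2*w))^2/(2*(w*v/(v+2*w))))) := by
  have hπ := Real.pi_pos
  have hvw : (0:ℝ) < v + 2*w := by linarith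
  set E₁ : ℝ := -u^2/(2*w) - (x-u)^2/(2*v) - (y-u)^2/(2*v) with hE₁
  set E₂ : ℝ := -c^2/(v+2*w) - (c/(v+2*w))*(x-c) - (c/(v+2*w))*(y-c)
      - (u - w*(x+y)/(v+2*w))^2/(2*(w*v/(v+2*w))) with hE₂
  have hA : (1 / Real.sqrt (2*π*w)) * Real.exp (-u^2/(2*w)) *
      ((1 / Real.sqrt (2*π*v)) * Real.exp (-(x-u)^2/(2*v))) *
      ((1 / Real.sqrt (2*π*v)) * Real.exp (-(y-u)^2/(2*v)))
      = (1 / (Real.sqrt (2*π*w) * Real.sqrt (2*π*v) * Real.sqrt (2*π*v))) * Real.exp E₁ := by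
    rw [hE₁, show -u^2/(2*w) - (x-u)^2/(2*v) - (y-u)^2/(2*v)
        = (-u^2/(2*w)) + (-(x-u)^2/(2*v)) + (-(y-u)^2/(2*v)) by ring,
      Real.exp_add, Real.exp_add]
    ring
  have hB : (Real.exp (-c^2/(v+2*w)) / (2*π*Real.sqrt (v*(v+2*w)))) *
      Real.exp (-(c/(v+2*w))*(x-c)) * Real.exp (-(c/(v+2*w))*(y-c)) *
      ((1 / Real.sqrt (2*π*(w*v/(v+2*w)))) *
        Real.exp (-(u - w*(x+y)/(v+2*w))^2/(2*(w*v/(v+2*w)))))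
      = (1 / (2*π*Real.sqrt (v*(v+2*w)) * Real.sqrt (2*π*(w*v/(v+2*w))))) * Real.exp E₂ := by
    rw [hE₂, show -c^2/(v+2*w) - (c/(v+2*w))*(x-c) - (c/(v+2*w))*(y-c)
        - (u - w*(x+y)/(v+2*w))^2/(2*(w*v/(v+2*w)))
        = (-c^2/(v+2*w)) + (-(c/(v+2*w))*(x-c)) + (-(c/(v+2*w))*(y-c))
          + (-(u - w*(x+y)/(v+2*w))^2/(2*(w*v/(v+2*w)))) by ring,
      Real.exp_add, Real.exp_add, Real.exp_add]
    ring
  rw [hA, hB, sqrt_const_eq w v hw hv]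
  have hE : E₁ ≤ E₂ := by
    have hkey : E₂ - E₁ = ((v+w)*(x-c)^2 + (v+w)*(y-c)^2 - 2*w*(x-c)*(y-c))/(2*v*(v+2*w)) := by
      rw [hE₁, hE₂]
      field_simp
      ring
    have hnum : (0:ℝ) ≤ (v+w)*(x-c)^2 + (v+w)*(y-c)^2 - 2*w*(x-c)*(y-c) := by
      nlinarith [mul_nonneg hw.le (sq_nonneg ((x-c)-(y-c))),
        mul_nonneg hv.le (sq_nonneg (x-c)), mul_nonneg hv.le (sq_nonneg (y-c))]
    have : (0:ℝ) ≤ E₂ - E₁ := hkey ▸ div_nonneg hnum (by positivity)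
    linarith
  exact mul_le_mul_of_nonneg_left (Real.exp_le_exp.mpr hE) (by positivity)

lemma lint_shift (f : ℝ → ℝ≥0∞) (c u : ℝ) :
    ∫⁻ x in Set.Ici c, f (x - u) = ∫⁻ b in Set.Ici (c - u), f b := by
  rw [← lintegral_indicator measurableSet_Ici, ← lintegral_indicator measurableSet_Ici]
  calc ∫⁻ x, (Set.Ici c).indicator (fun x => f (x - u)) x
      = ∫⁻ x, (Set.Ici (c-u)).indicator f (x + -u) := by
        congr 1; ext x
        by_cases hx : c ≤ x
        · simp only [Set.indicator, Set.mem_Ici, if_pos hx, sub_eq_add_neg]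
          rw [if_pos (by linarith : c + -u ≤ x + -u)]
        · simp only [Set.indicator, Set.mem_Ici, if_neg hx, sub_eq_add_neg]
          rw [if_neg (by intro h; exact hx (by linarith) : ¬ (c + -u ≤ x + -u))]
    _ = ∫⁻ b, (Set.Ici (c-u)).indicator f b := lintegral_add_right_eq_self _ _

lemma lint_exp {d : ℝ} (hd : 0 < d) (c : ℝ) :
    ∫⁻ x in Set.Ici c, ENNReal.ofReal (Real.exp (-(d*(x - c)))) = ENNReal.ofReal d⁻¹ := by
  have h0 : ∫⁻ x in Set.Ici c, ENNReal.ofReal (Real.exp (-(d*(x - c))))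
      = ∫⁻ t in Set.Ici (0:ℝ), ENNReal.ofReal (Real.exp (-(d*t))) := by
    have := lint_shift (fun t => ENNReal.ofReal (Real.exp (-(d*t)))) c c
    simpa using this
  rw [h0]
  have hexp : ∫⁻ x, exponentialPDF d x = 1 := lintegral_exponentialPDF_eq_one hd
  have heq : ∫⁻ x, exponentialPDF d x
      = ∫⁻ x in Set.Ici (0:ℝ), ENNReal.ofReal (d * Real.exp (-(d*x))) := by
    rw [← lintegral_indicator measurableSet_Ici]
    congr 1; ext x
    rw [exponentialPDF_eq]
    by_cases hx : (0:ℝ) ≤ x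
    · simp [Set.indicator, hx]
    · simp [Set.indicator, hx]
  have hmul : ∫⁻ x in Set.Ici (0:ℝ), ENNReal.ofReal (d * Real.exp (-(d*x)))
      = ENNReal.ofReal d * ∫⁻ x in Set.Ici (0:ℝ), ENNReal.ofReal (Real.exp (-(d*x))) := by
    rw [← lintegral_const_mul _ (by fun_prop)]
    congr 1; ext x
    rw [← ENNReal.ofReal_mul hd.le]
  have h1 : ENNReal.ofReal d * ∫⁻ x in Set.Ici (0:ℝ), ENNReal.ofReal (Real.exp (-(d*x))) = 1 := by
    rw [← hmul, ← heq, hexp]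
  have hne : ENNReal.ofReal d ≠ 0 := by simp [hd]
  have hnt : ENNReal.ofReal d ≠ ⊤ := ENNReal.ofReal_ne_top
  calc ∫⁻ x in Set.Ici (0:ℝ), ENNReal.ofReal (Real.exp (-(d*x)))
      = (ENNReal.ofReal d)⁻¹ * (ENNReal.ofReal d * ∫⁻ x in Set.Ici (0:ℝ),
          ENNReal.ofReal (Real.exp (-(d*x)))) := by
        rw [← mul_assoc, ENNReal.inv_mul_cancel hne hnt, one_mul]
    _ = (ENNReal.ofReal d)⁻¹ := by rw [h1, mul_one]
    _ = ENNReal.ofReal d⁻¹ := (ENNReal.ofReal_inv_of_pos hd).symm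

lemma gauss_Ici {v : ℝ≥0} (hv : v ≠ 0) (c u : ℝ) :
    gaussianReal 0 v (Set.Ici (c - u)) = ∫⁻ x in Set.Ici c, gaussianPDF 0 v (x - u) := by
  rw [gaussianReal_of_var_ne_zero _ hv, withDensity_apply _ measurableSet_Ici,
    lint_shift (gaussianPDF 0 v) c u]

lemma inner_bound (w v : ℝ≥0) (hw : w ≠ 0) (hv : v ≠ 0) (c x y : ℝ) :
    ∫⁻ u, gaussianPDF 0 w u * gaussianPDF 0 v (x - u) * gaussianPDF 0 v (y - u)
      ≤ ENNReal.ofReal (Real.exp (-c^2/((v:ℝ)+2*(w:ℝ))) / (2*π*Real.sqrt ((v:ℝ)*((v:ℝ)+2*(w:ℝ))))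
          * Real.exp (-(c/((v:ℝ)+2*(w:ℝ)))*(x-c)) * Real.exp (-(c/((v:ℝ)+2*(w:ℝ)))*(y-c))) := by
  have hwR : (0:ℝ) < (w:ℝ) := NNReal.coe_pos.mpr (pos_iff_ne_zero.mpr hw)
  have hvR : (0:ℝ) < (v:ℝ) := NNReal.coe_pos.mpr (pos_iff_ne_zero.mpr hv)
  set τ : ℝ≥0 := ⟨(w:ℝ)*(v:ℝ)/((v:ℝ)+2*(w:ℝ)), by positivity⟩ with hτdef
  have hτR : ((τ:ℝ)) = (w:ℝ)*(v:ℝ)/((v:ℝ)+2*(w:ℝ)) := rfl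
  have hτ0 : τ ≠ 0 := by
    intro h
    have : ((τ:ℝ)) = 0 := by rw [h]; simp
    rw [hτR] at this
    have : (0:ℝ) < (w:ℝ)*(v:ℝ)/((v:ℝ)+2*(w:ℝ)) := by positivity
    linarith
  set C : ℝ := Real.exp (-c^2/((v:ℝ)+2*(w:ℝ))) / (2*π*Real.sqrt ((v:ℝ)*((v:ℝ)+2*(w:ℝ))))
      * Real.exp (-(c/((v:ℝ)+2*(w:ℝ)))*(x-c)) * Real.exp (-(c/((v:ℝ)+2*(w:ℝ)))*(y-c)) with hC
  have hCnn : 0 ≤ C := by positivity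
  have hpt : ∀ u, gaussianPDF 0 w u * gaussianPDF 0 v (x - u) * gaussianPDF 0 v (y - u)
      ≤ ENNReal.ofReal C * gaussianPDF ((w:ℝ)*(x+y)/((v:ℝ)+2*(w:ℝ))) τ u := by
    intro u
    rw [gaussianPDF, gaussianPDF, gaussianPDF, gaussianPDF,
      ← ENNReal.ofReal_mul (gaussianPDFReal_nonneg _ _ _),
      ← ENNReal.ofReal_mul (mul_nonneg (gaussianPDFReal_nonneg _ _ _) (gaussianPDFReal_nonneg _ _ _)),
      ← ENNReal.ofReal_mul hCnn]
    apply ENNReal.ofReal_le_ofReal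
    have h := core_ineq (w:ℝ) (v:ℝ) c x y u hwR hvR
    refine le_trans (le_of_eq ?_) (le_trans h (le_of_eq ?_))
    · simp only [gaussianPDFReal, sub_zero]
      ring
    · simp only [gaussianPDFReal, hτR, hC]
      ring
  calc ∫⁻ u, gaussianPDF 0 w u * gaussianPDF 0 v (x - u) * gaussianPDF 0 v (y - u)
      ≤ ∫⁻ u, ENNReal.ofReal C * gaussianPDF ((w:ℝ)*(x+y)/((v:ℝ)+2*(w:ℝ))) τ u :=
        lintegral_mono hpt
    _ = ENNReal.ofReal C * ∫⁻ u, gaussianPDF ((w:ℝ)*(x+y)/((v:ℝ)+2*(w:ℝ))) τ u :=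
        lintegral_const_mul _ (measurable_gaussianPDF _ _)
    _ = ENNReal.ofReal C := by rw [lintegral_gaussianPDF_eq_one _ hτ0, mul_one]

lemma key_bound (w v : ℝ≥0) (hw : w ≠ 0) (hv : v ≠ 0) (c : ℝ) (hc : 0 < c) :
    ((gaussianReal 0 w).prod ((gaussianReal 0 v).prod (gaussianReal 0 v)))
      {p : ℝ × ℝ × ℝ | c ≤ p.1 + p.2.1 ∧ c ≤ p.1 + p.2.2}
    ≤ ENNReal.ofReal (Real.exp (-c^2/((v:ℝ)+2*(w:ℝ))) / (2*π*Real.sqrt ((v:ℝ)*((v:ℝ)+2*(w:ℝ))))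
        * (((v:ℝ)+2*(w:ℝ))/c * (((v:ℝ)+2*(w:ℝ))/c))) := by
  have hwR : (0:ℝ) < (w:ℝ) := NNReal.coe_pos.mpr (pos_iff_ne_zero.mpr hw)
  have hvR : (0:ℝ) < (v:ℝ) := NNReal.coe_pos.mpr (pos_iff_ne_zero.mpr hv)
  have hπ := Real.pi_pos
  set d : ℝ := c/((v:ℝ)+2*(w:ℝ)) with hd
  have hdpos : 0 < d := by positivity
  set K₀ : ℝ := Real.exp (-c^2/((v:ℝ)+2*(w:ℝ))) / (2*π*Real.sqrt ((v:ℝ)*((v:ℝ)+2*(w:ℝ))))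
    with hK₀
  have hK₀nn : 0 ≤ K₀ := by positivity
  have hS : MeasurableSet {p : ℝ × ℝ × ℝ | c ≤ p.1 + p.2.1 ∧ c ≤ p.1 + p.2.2} := by
    apply MeasurableSet.inter
    · exact measurableSet_le measurable_const (measurable_fst.add (measurable_fst.comp measurable_snd))
    · exact measurableSet_le measurable_const (measurable_fst.add (measurable_snd.comp measurable_snd))
  rw [Measure.prod_apply hS]
  have hpre : ∀ u : ℝ, (Prod.mk u ⁻¹' {p : ℝ × ℝ × ℝ | c ≤ p.1 + p.2.1 ∧ c ≤ p.1 + p.2.2})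
      = Set.Ici (c-u) ×ˢ Set.Ici (c-u) := by
    intro u
    ext ⟨q1, q2⟩
    simp only [Set.mem_preimage, Set.mem_setOf_eq, Set.mem_prod, Set.mem_Ici]
    constructor <;> intro h <;> exact ⟨by linarith [h.1], by linarith [h.2]⟩
  simp_rw [hpre, Measure.prod_prod]
  have hmono : Measurable fun u : ℝ =>
      gaussianReal 0 v (Set.Ici (c-u)) * gaussianReal 0 v (Set.Ici (c-u)) := by
    have hm : Monotone fun u : ℝ => gaussianReal 0 v (Set.Ici (c-u)) := fun u₁ u₂ h =>
      measure_mono (Set.Ici_subset_Ici.mpr (by linarith))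
    exact hm.measurable.mul hm.measurable
  rw [gaussianReal_of_var_ne_zero _ hw,
    lintegral_withDensity_eq_lintegral_mul _ (measurable_gaussianPDF _ _) hmono]
  simp only [Pi.mul_apply]
  have hgv : ∀ u : ℝ, Measurable fun x : ℝ => gaussianPDF 0 v (x - u) := fun u =>
    (measurable_gaussianPDF 0 v).comp (measurable_id.sub measurable_const)
  have e0 : ∀ u : ℝ, gaussianPDF 0 w u * (gaussianReal 0 v (Set.Ici (c-u)) *
      gaussianReal 0 v (Set.Ici (c-u)))
      = ∫⁻ x in Set.Ici c, ∫⁻ y in Set.Ici c,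
          gaussianPDF 0 w u * gaussianPDF 0 v (x - u) * gaussianPDF 0 v (y - u) := by
    intro u
    have einner : ∀ x : ℝ, (∫⁻ y in Set.Ici c,
        gaussianPDF 0 w u * gaussianPDF 0 v (x - u) * gaussianPDF 0 v (y - u))
        = gaussianPDF 0 w u * gaussianPDF 0 v (x - u) * gaussianReal 0 v (Set.Ici (c-u)) := by
      intro x
      rw [lintegral_const_mul _ (hgv u), gauss_Ici hv c u]
    simp_rw [einner]
    rw [lintegral_mul_const _ (measurable_const.fun_mul (hgv u)),
      lintegral_const_mul _ (hgv u), gauss_Ici hv c u]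
    ring
  rw [lintegral_congr e0]
  have hT : Measurable (Function.uncurry fun (p : ℝ × ℝ) (y : ℝ) =>
      gaussianPDF 0 w p.1 * gaussianPDF 0 v (p.2 - p.1) * gaussianPDF 0 v (y - p.1)) := by
    show Measurable fun q : (ℝ × ℝ) × ℝ =>
      gaussianPDF 0 w q.1.1 * gaussianPDF 0 v (q.1.2 - q.1.1) * gaussianPDF 0 v (q.2 - q.1.1)
    apply Measurable.fun_mul
    apply Measurable.fun_mul
    · exact (measurable_gaussianPDF 0 w).comp (measurable_fst.comp measurable_fst)
    · exact (measurable_gaussianPDF 0 v).comp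
        ((measurable_snd.comp measurable_fst).sub (measurable_fst.comp measurable_fst))
    · exact (measurable_gaussianPDF 0 v).comp
        (measurable_snd.sub (measurable_fst.comp measurable_fst))
  have swap1 : ∫⁻ u, ∫⁻ x in Set.Ici c, (∫⁻ y in Set.Ici c,
        gaussianPDF 0 w u * gaussianPDF 0 v (x - u) * gaussianPDF 0 v (y - u))
      = ∫⁻ x in Set.Ici c, ∫⁻ u, (∫⁻ y in Set.Ici c,
        gaussianPDF 0 w u * gaussianPDF 0 v (x - u) * gaussianPDF 0 v (y - u)) := by
    apply lintegral_lintegral_swap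
    exact (Measurable.lintegral_prod_right hT).aemeasurable
  rw [swap1]
  have step2 : ∀ x : ℝ, ∫⁻ u, (∫⁻ y in Set.Ici c,
        gaussianPDF 0 w u * gaussianPDF 0 v (x - u) * gaussianPDF 0 v (y - u))
      ≤ ENNReal.ofReal (K₀ * Real.exp (-(d*(x-c)))) * ENNReal.ofReal d⁻¹ := by
    intro x
    have hTx : Measurable fun q : ℝ × ℝ =>
        gaussianPDF 0 w q.1 * gaussianPDF 0 v (x - q.1) * gaussianPDF 0 v (q.2 - q.1) := by
      apply Measurable.fun_mul
      apply Measurable.fun_mul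
      · exact (measurable_gaussianPDF 0 w).comp measurable_fst
      · exact (measurable_gaussianPDF 0 v).comp (measurable_const.sub measurable_fst)
      · exact (measurable_gaussianPDF 0 v).comp (measurable_snd.sub measurable_fst)
    have swap2 : ∫⁻ u, (∫⁻ y in Set.Ici c,
          gaussianPDF 0 w u * gaussianPDF 0 v (x - u) * gaussianPDF 0 v (y - u))
        = ∫⁻ y in Set.Ici c, ∫⁻ u,
          gaussianPDF 0 w u * gaussianPDF 0 v (x - u) * gaussianPDF 0 v (y - u) := by
      apply lintegral_lintegral_swap
      exact (hTx : Measurable (Function.uncurry fun (u y : ℝ) =>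
        gaussianPDF 0 w u * gaussianPDF 0 v (x - u) * gaussianPDF 0 v (y - u))).aemeasurable
    rw [swap2]
    calc ∫⁻ y in Set.Ici c, ∫⁻ u,
          gaussianPDF 0 w u * gaussianPDF 0 v (x - u) * gaussianPDF 0 v (y - u)
        ≤ ∫⁻ y in Set.Ici c, ENNReal.ofReal (K₀ * Real.exp (-(d*(x-c))) *
            Real.exp (-(d*(y-c)))) := by
          apply lintegral_mono
          intro y
          have := inner_bound w v hw hv c x y
          simpa only [← hK₀, ← hd, neg_mul] using this
      _ = ENNReal.ofReal (K₀ * Real.exp (-(d*(x-c)))) * ENNReal.ofReal d⁻¹ := by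
          simp_rw [ENNReal.ofReal_mul (by positivity : (0:ℝ) ≤ K₀ * Real.exp (-(d*(x-c))))]
          rw [lintegral_const_mul _ (by fun_prop), lint_exp hdpos c]
  calc ∫⁻ x in Set.Ici c, ∫⁻ u, (∫⁻ y in Set.Ici c,
        gaussianPDF 0 w u * gaussianPDF 0 v (x - u) * gaussianPDF 0 v (y - u))
      ≤ ∫⁻ x in Set.Ici c, ENNReal.ofReal (K₀ * Real.exp (-(d*(x-c)))) * ENNReal.ofReal d⁻¹ :=
        lintegral_mono step2
    _ = ENNReal.ofReal K₀ * ENNReal.ofReal d⁻¹ * ENNReal.ofReal d⁻¹ := by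
        rw [lintegral_mul_const _ (by fun_prop)]
        simp_rw [ENNReal.ofReal_mul hK₀nn]
        rw [lintegral_const_mul _ (by fun_prop), lint_exp hdpos c]
    _ = ENNReal.ofReal (K₀ * (d⁻¹ * d⁻¹)) := by
        rw [ENNReal.ofReal_mul hK₀nn, ENNReal.ofReal_mul (by positivity : (0:ℝ) ≤ d⁻¹)]
        ring
    _ = ENNReal.ofReal (K₀ * (((v:ℝ)+2*(w:ℝ))/c * (((v:ℝ)+2*(w:ℝ))/c))) := by
        rw [hd, inv_div]

/-- Savage-type tail bound for a centered bivariate Gaussian `(X,Y)` with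
`Var X = Var Y = C(K,2)` and `Cov(X,Y) = C(l,2)`, `2 ≤ l ≤ K-1`. The pair is
realized as `X = A + B₁`, `Y = A + B₂` with `A ~ N(0, C(l,2))` and
`B₁, B₂ ~ N(0, C(K,2) - C(l,2))` independent. Then for `γ > 0`,
`P(X ≥ γ·C(K,2) ∧ Y ≥ γ·C(K,2)) ≤ (1/(2πγ²)) · (C(K,2)+C(l,2))² /
  (C(K,2)²·√(C(K,2)² - C(l,2)²)) · exp(-γ²·C(K,2)²/(C(K,2)+C(l,2)))`. -/
theorem bivariate_gaussian_joint_tail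
    {Ω : Type*} [MeasurableSpace Ω] (μ : Measure Ω) [IsProbabilityMeasure μ]
    (K l : ℕ) (hl : 2 ≤ l) (hlK : l ≤ K - 1)
    (A B₁ B₂ : Ω → ℝ)
    (hmeas : Measurable A ∧ Measurable B₁ ∧ Measurable B₂)
    (hindep : iIndepFun ![A, B₁, B₂] μ)
    (hA : μ.map A = gaussianReal 0 ((l.choose 2 : ℕ) : NNReal))
    (hB₁ : μ.map B₁ = gaussianReal 0 ((K.choose 2 - l.choose 2 : ℕ) : NNReal))
    (hB₂ : μ.map B₂ = gaussianReal 0 ((K.choose 2 - l.choose 2 : ℕ) : NNReal))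
    (γ : ℝ) (hγ : 0 < γ) :
    (μ {ω | γ * (K.choose 2 : ℝ) ≤ A ω + B₁ ω ∧
            γ * (K.choose 2 : ℝ) ≤ A ω + B₂ ω}).toReal
      ≤ (1 / (2 * Real.pi * γ ^ 2)) *
          ((K.choose 2 : ℝ) + (l.choose 2 : ℝ)) ^ 2 /
          ((K.choose 2 : ℝ) ^ 2 *
            Real.sqrt ((K.choose 2 : ℝ) ^ 2 - (l.choose 2 : ℝ) ^ 2)) *
          Real.exp (-γ ^ 2 * (K.choose 2 : ℝ) ^ 2 /
            ((K.choose 2 : ℝ) + (l.choose 2 : ℝ))) := by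
  obtain ⟨hmA, hmB₁, hmB₂⟩ := hmeas
  have hπ := Real.pi_pos
  have hKl : l < K := by omega
  have hcle : l.choose 2 ≤ K.choose 2 := Nat.choose_le_choose 2 hKl.le
  have hcp : 0 < l.choose 2 := Nat.choose_pos hl
  have hclt : l.choose 2 < K.choose 2 := by
    have h1 : (l+1).choose 2 = l.choose 1 + l.choose 2 := Nat.choose_succ_succ l 1
    have h2 : (l+1).choose 2 ≤ K.choose 2 := Nat.choose_le_choose 2 hKl
    have h3 : l.choose 1 = l := Nat.choose_one_right l
    omega
  set w : ℝ≥0 := ((l.choose 2 : ℕ) : NNReal) with hwdef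
  set v : ℝ≥0 := ((K.choose 2 - l.choose 2 : ℕ) : NNReal) with hvdef
  have hw : w ≠ 0 := Nat.cast_ne_zero.mpr (by omega)
  have hv : v ≠ 0 := Nat.cast_ne_zero.mpr (by omega)
  set a : ℝ := (K.choose 2 : ℝ) with hadef
  set b : ℝ := (l.choose 2 : ℝ) with hbdef
  have hwR : (w:ℝ) = b := by rw [hwdef, hbdef]; simp
  have hvR : (v:ℝ) = a - b := by
    rw [hvdef, hadef, hbdef, NNReal.coe_natCast, Nat.cast_sub hcle]
  have hb1 : (0:ℝ) < b := by rw [hbdef]; exact_mod_cast hcp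
  have hab : b < a := by rw [hadef, hbdef]; exact_mod_cast hclt
  have ha : (0:ℝ) < a := lt_trans hb1 hab
  set c : ℝ := γ * a with hcdef
  have hc : 0 < c := mul_pos hγ ha
  have hφ : Measurable fun ω => (A ω, (B₁ ω, B₂ ω)) := hmA.prodMk (hmB₁.prodMk hmB₂)
  have hS : MeasurableSet {p : ℝ × ℝ × ℝ | c ≤ p.1 + p.2.1 ∧ c ≤ p.1 + p.2.2} := by
    apply MeasurableSet.inter
    · exact measurableSet_le measurable_const
        (measurable_fst.add (measurable_fst.comp measurable_snd))
    · exact measurableSet_le measurable_const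
        (measurable_fst.add (measurable_snd.comp measurable_snd))
  have hmeas' : ∀ i, Measurable (![A, B₁, B₂] i) := by
    intro i; fin_cases i <;> simpa
  have hp : IndepFun (fun ω => (B₁ ω, B₂ ω)) A μ := by
    have := hindep.indepFun_prodMk hmeas' 1 2 0 (by decide) (by decide)
    simpa using this
  have h23 : IndepFun B₁ B₂ μ := by
    have := hindep.indepFun (show (1:Fin 3) ≠ 2 by decide)
    simpa using this
  have hmap : μ.map (fun ω => (A ω, (B₁ ω, B₂ ω)))
      = (gaussianReal 0 w).prod ((gaussianReal 0 v).prod (gaussianReal 0 v)) := by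
    rw [(indepFun_iff_map_prod_eq_prod_map_map hmA.aemeasurable
        ((hmB₁.prodMk hmB₂).aemeasurable)).mp hp.symm,
      (indepFun_iff_map_prod_eq_prod_map_map hmB₁.aemeasurable hmB₂.aemeasurable).mp h23,
      hA, hB₁, hB₂]
  have hμ : μ {ω | c ≤ A ω + B₁ ω ∧ c ≤ A ω + B₂ ω}
      = ((gaussianReal 0 w).prod ((gaussianReal 0 v).prod (gaussianReal 0 v)))
        {p : ℝ × ℝ × ℝ | c ≤ p.1 + p.2.1 ∧ c ≤ p.1 + p.2.2} := by
    rw [← hmap, Measure.map_apply hφ hS]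
    rfl
  rw [show {ω | γ * a ≤ A ω + B₁ ω ∧ γ * a ≤ A ω + B₂ ω}
      = {ω | c ≤ A ω + B₁ ω ∧ c ≤ A ω + B₂ ω} by rw [hcdef], hμ]
  refine le_trans (ENNReal.toReal_mono ENNReal.ofReal_ne_top (key_bound w v hw hv c hc)) ?_
  rw [ENNReal.toReal_ofReal (by positivity)]
  have e1 : (v:ℝ) + 2*(w:ℝ) = a + b := by rw [hvR, hwR]; ring
  have e2 : (v:ℝ)*((v:ℝ)+2*(w:ℝ)) = a^2 - b^2 := by rw [hvR, hwR]; ring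
  rw [e2, e1]
  have hsq : 0 < Real.sqrt (a^2 - b^2) := Real.sqrt_pos.mpr (by nlinarith)
  rw [show -c^2/(a+b) = -γ^2*a^2/(a+b) by rw [hcdef]; ring]
  apply le_of_eq
  rw [hcdef]
  field_simp
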